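/- Claim (L² lower bound for the averaged pullback under a quasi-isometry): Let Φ : Γ → Γ̂ be a quasi-isometry with constants ε, a, b, C_q between connected weighted graphs with controlled and uniformly lazy weights. Then there exists a constant C_B > 0, depending only on ε and the quasi-isometry and weight constants, such that for every z ∈ Γ̂, every r ≥ 1, and every non-negative function f : Γ̂ → ℝ supported in B̂(z, r): ∑_{α ∈ Γ} |f_ε(Φ(α))|² π(α) ≥ C_B ∑_{x ∈ Γ̂} |f(x)|² π̂(x). -/

import Mathlib

open scoped BigOperators

/-- Sum of a real-valued function over a set of vertices. -/
noncomputable def setSum {V : Type*} (A : Set V) (f : V → ℝ) : ℝ := ∑' y : A, f (y : V)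

open Classical in
/-- The Markov kernel attached to vertex weights `pw` and edge weights `ew`. -/
noncomputable def mkernel {V : Type*} (pw : V → ℝ) (ew : V → V → ℝ) (x y : V) : ℝ :=
  if x = y then 1 - (∑' z, ew x z) / pw x else ew x y / pw x

open Classical in
/-- Iterates (convolution powers) of the Markov kernel. -/
noncomputable def mkernelPow {V : Type*} (pw : V → ℝ) (ew : V → V → ℝ) : ℕ → V → V → ℝ
  | 0 => fun x y => if x = y then 1 else 0
  | n + 1 => fun x y => ∑' z, mkernel pw ew x z * mkernelPow pw ew n z y

/-- The heat kernel (transition density) of the random walk. -/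
noncomputable def mheat {V : Type*} (pw : V → ℝ) (ew : V → V → ℝ) (n : ℕ) (x y : V) : ℝ :=
  mkernelPow pw ew n x y / pw y

/-- A weighted graph: a simple connected graph with symmetric, adapted edge weights
subordinate to positive vertex weights. -/
structure WeightedGraph (V : Type*) where
  G : SimpleGraph V
  wV : V → ℝ
  wE : V → V → ℝ
  wV_pos : ∀ x, 0 < wV x
  wE_nonneg : ∀ x y, 0 ≤ wE x y
  wE_symm : ∀ x y, wE x y = wE y x
  adapted : ∀ x y, 0 < wE x y ↔ G.Adj x y
  connected : G.Connected
  wE_summable : ∀ x, Summable fun y => wE x y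
  subordinate : ∀ x, (∑' y, wE x y) ≤ wV x

namespace WeightedGraph

variable {V : Type*}

/-- Controlled weights with constant `Cc`. -/
def Controlled (Γ : WeightedGraph V) (Cc : ℝ) : Prop :=
  1 < Cc ∧ ∀ x y, Γ.G.Adj x y → Γ.wV x ≤ Cc * Γ.wE x y

/-- Uniformly lazy weights with constant `Ce`. -/
def UniformlyLazy (Γ : WeightedGraph V) (Ce : ℝ) : Prop :=
  Ce ∈ Set.Ioo (0 : ℝ) 1 ∧ ∀ x, (∑' y, Γ.wE x y) ≤ (1 - Ce) * Γ.wV x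

/-- Closed ball for the graph distance. -/
noncomputable def ball (Γ : WeightedGraph V) (x : V) (r : ℝ) : Set V :=
  {y | (Γ.G.dist x y : ℝ) ≤ r}

/-- Volume of a ball. -/
noncomputable def vol (Γ : WeightedGraph V) (x : V) (r : ℝ) : ℝ :=
  setSum (Γ.ball x r) Γ.wV

/-- Dirichlet energy of a function. -/
noncomputable def energy (Γ : WeightedGraph V) (f : V → ℝ) : ℝ :=
  (∑' x, ∑' y, (f x - f y) ^ 2 * Γ.wE x y) / 2

/-- Squared `L²`-norm of a function. -/
noncomputable def sqnorm (Γ : WeightedGraph V) (f : V → ℝ) : ℝ :=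
  ∑' x, f x ^ 2 * Γ.wV x

/-- The first Dirichlet eigenvalue of a finite set `Ω`. -/
noncomputable def lambda1 (Γ : WeightedGraph V) (Ω : Finset V) : ℝ :=
  sInf {q | ∃ f : V → ℝ, f ≠ 0 ∧ (∀ x, f x ≠ 0 → x ∈ Ω) ∧ q = Γ.energy f / Γ.sqnorm f}

/-- `Λ` is a relative Faber-Krahn function of `Γ`: for balls `B(z,r)` the map
`ν ↦ Λ z r ν` is non-increasing, and `λ₁(Ω) ≥ Λ(B, π(Ω))` for nonempty finite `Ω ⊆ B`. -/
def IsRelFK (Γ : WeightedGraph V) (Λ : V → ℝ → ℝ → ℝ) : Prop :=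
  (∀ z r ν₁ ν₂, 0 < ν₁ → ν₁ ≤ ν₂ → Λ z r ν₂ ≤ Λ z r ν₁) ∧
  ∀ z : V, ∀ r : ℝ, ∀ Ω : Finset V, Ω.Nonempty → (∀ x ∈ Ω, x ∈ Γ.ball z r) →
    Λ z r (∑ x ∈ Ω, Γ.wV x) ≤ Γ.lambda1 Ω

/-- The heat kernel of the weighted graph. -/
noncomputable def heatKernel (Γ : WeightedGraph V) : ℕ → V → V → ℝ :=
  mheat Γ.wV Γ.wE

/-- `ε`-average of a function over closed balls of radius `ε`. -/
noncomputable def avg (Γ : WeightedGraph V) (ε : ℝ) (f : V → ℝ) (x : V) : ℝ :=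
  setSum (Γ.ball x ε) (fun y => f y * Γ.wV y) / Γ.vol x ε

/-- `Φ` is a quasi-isometry between weighted graphs with constants `ε, a, b, Cq`. -/
structure IsQI {V₁ V₂ : Type*} (Γ₁ : WeightedGraph V₁) (Γ₂ : WeightedGraph V₂)
    (Φ : V₁ → V₂) (ε a b Cq : ℝ) : Prop where
  eps_pos : 0 < ε
  a_pos : 0 < a
  b_nonneg : 0 ≤ b
  Cq_pos : 0 < Cq
  dense : ∀ z : V₂, ∃ x : V₁, (Γ₂.G.dist (Φ x) z : ℝ) ≤ ε
  dist_lower : ∀ x y : V₁, a⁻¹ * (Γ₁.G.dist x y : ℝ) - b ≤ (Γ₂.G.dist (Φ x) (Φ y) : ℝ)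
  dist_upper : ∀ x y : V₁, (Γ₂.G.dist (Φ x) (Φ y) : ℝ) ≤ a * (Γ₁.G.dist x y : ℝ)
  weight_lower : ∀ x, Cq⁻¹ * Γ₁.wV x ≤ Γ₂.wV (Φ x)
  weight_upper : ∀ x, Γ₂.wV (Φ x) ≤ Cq * Γ₁.wV x

end WeightedGraph


namespace WeightedGraph

variable {V : Type*} {Γ : WeightedGraph V} {Cc : ℝ}

section Helpers

lemma setSum_eq_sum' {A : Set V} (hA : A.Finite) (f : V → ℝ) :
    setSum A f = ∑ y ∈ hA.toFinset, f y := by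
  unfold setSum
  haveI := hA.fintype
  rw [tsum_fintype, ← Finset.sum_coe_sort (hA.toFinset) f]
  exact Fintype.sum_equiv (Equiv.setCongr hA.coe_toFinset.symm) _ _ (fun x => rfl)

lemma wE_le_wV (x y : V) : Γ.wE x y ≤ Γ.wV x :=
  le_trans (Summable.le_tsum (Γ.wE_summable x) y (fun _ _ => Γ.wE_nonneg x _)) (Γ.subordinate x)

lemma adj_wV_le (hc : Γ.Controlled Cc) {x y : V} (h : Γ.G.Adj x y) :
    Γ.wV y ≤ Cc * Γ.wV x := by
  have h0 : (0:ℝ) ≤ Cc := le_of_lt (lt_trans one_pos hc.1)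
  calc Γ.wV y ≤ Cc * Γ.wE y x := hc.2 y x h.symm
  _ = Cc * Γ.wE x y := by rw [Γ.wE_symm]
  _ ≤ Cc * Γ.wV x := mul_le_mul_of_nonneg_left (wE_le_wV x y) h0

lemma neighbors_finite (hc : Γ.Controlled Cc) (x : V) : {y | Γ.G.Adj x y}.Finite := by
  have hCc : (0:ℝ) < Cc := lt_trans one_pos hc.1
  have h0 : 0 < Γ.wV x / Cc := div_pos (Γ.wV_pos x) hCc
  have hev : ∀ᶠ y in Filter.cofinite, Γ.wE x y < Γ.wV x / Cc :=
    (Γ.wE_summable x).tendsto_cofinite_zero.eventually (gt_mem_nhds h0)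
  have hfin : {y | ¬ Γ.wE x y < Γ.wV x / Cc}.Finite := Filter.eventually_cofinite.mp hev
  refine hfin.subset ?_
  intro y hy
  have h1 : Γ.wV x ≤ Cc * Γ.wE x y := hc.2 x y hy
  simp only [Set.mem_setOf_eq, not_lt]
  rw [div_le_iff₀ hCc]
  linarith

/-- The neighborhood finset of a vertex of a controlled weighted graph. -/
noncomputable def nbhd (hc : Γ.Controlled Cc) (x : V) : Finset V :=
  (neighbors_finite hc x).toFinset

lemma mem_nbhd (hc : Γ.Controlled Cc) {x y : V} : y ∈ nbhd hc x ↔ Γ.G.Adj x y := by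
  simp [nbhd]

lemma nbhd_card (hc : Γ.Controlled Cc) (x : V) : (nbhd hc x).card ≤ ⌊Cc⌋₊ := by
  have hCc : (0:ℝ) < Cc := lt_trans one_pos hc.1
  have h1 : (nbhd hc x).card • (Γ.wV x / Cc) ≤ ∑ y ∈ nbhd hc x, Γ.wE x y := by
    refine Finset.card_nsmul_le_sum _ _ _ ?_
    intro y hy
    rw [div_le_iff₀ hCc]
    have := hc.2 x y ((mem_nbhd hc).mp hy)
    linarith
  have h2 : ∑ y ∈ nbhd hc x, Γ.wE x y ≤ ∑' y, Γ.wE x y :=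
    Summable.sum_le_tsum _ (fun y _ => Γ.wE_nonneg x y) (Γ.wE_summable x)
  have h3 := Γ.subordinate x
  have hcard : ((nbhd hc x).card : ℝ) ≤ Cc := by
    by_contra hlt
    push_neg at hlt
    have hw := Γ.wV_pos x
    have : Cc * (Γ.wV x / Cc) < ((nbhd hc x).card : ℝ) * (Γ.wV x / Cc) :=
      mul_lt_mul_of_pos_right hlt (div_pos hw hCc)
    rw [mul_div_cancel₀ _ (ne_of_gt hCc)] at this
    rw [nsmul_eq_mul] at h1
    linarith
  exact Nat.le_floor hcard

lemma wV_le_of_walk (hc : Γ.Controlled Cc) {x y : V} (p : Γ.G.Walk x y) :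
    Γ.wV y ≤ Cc ^ p.length * Γ.wV x := by
  induction p with
  | nil => simp
  | @cons a b c h q ih =>
    have h1 : Γ.wV b ≤ Cc * Γ.wV a := adj_wV_le hc h
    have h2 : (0:ℝ) < Cc ^ q.length := pow_pos (lt_trans one_pos hc.1) _
    calc Γ.wV c ≤ Cc ^ q.length * Γ.wV b := ih
    _ ≤ Cc ^ q.length * (Cc * Γ.wV a) := mul_le_mul_of_nonneg_left h1 (le_of_lt h2)
    _ = Cc ^ (SimpleGraph.Walk.cons h q).length * Γ.wV a := by
        rw [SimpleGraph.Walk.length_cons]; ring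

lemma wV_le_of_dist (hc : Γ.Controlled Cc) {x y : V} {n : ℕ} (h : Γ.G.dist x y ≤ n) :
    Γ.wV y ≤ Cc ^ n * Γ.wV x := by
  obtain ⟨p, hp⟩ := Γ.connected.exists_walk_length_eq_dist x y
  calc Γ.wV y ≤ Cc ^ p.length * Γ.wV x := wV_le_of_walk hc p
  _ ≤ Cc ^ n * Γ.wV x := by
      apply mul_le_mul_of_nonneg_right _ (le_of_lt (Γ.wV_pos x))
      exact pow_le_pow_right₀ (le_of_lt hc.1) (by omega)

variable [DecidableEq V]

/-- An increasing family of finsets covering balls, with controlled cardinality. -/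
noncomputable def ballFinset (hc : Γ.Controlled Cc) (x : V) : ℕ → Finset V
  | 0 => {x}
  | n + 1 => (ballFinset hc x n) ∪ (ballFinset hc x n).biUnion (fun z => nbhd hc z)

lemma ballFinset_mono (hc : Γ.Controlled Cc) (x : V) {m n : ℕ} (h : m ≤ n) :
    ballFinset hc x m ⊆ ballFinset hc x n := by
  induction n with
  | zero => simpa [Nat.le_zero.mp h]
  | succ n ih =>
    rcases Nat.lt_or_ge m (n+1) with h'|h'
    · exact (ih (by omega)).trans (Finset.subset_union_left)
    · have : m = n + 1 := by omega
      simp [this]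

lemma mem_ballFinset_of_walk (hc : Γ.Controlled Cc) (x : V) {y : V} (p : Γ.G.Walk y x) :
    y ∈ ballFinset hc x p.length := by
  induction p with
  | nil => simp [ballFinset]
  | @cons a b c h q ih =>
    rw [SimpleGraph.Walk.length_cons]
    show a ∈ ballFinset hc c (q.length + 1)
    unfold ballFinset
    apply Finset.mem_union_right
    apply Finset.mem_biUnion.mpr
    exact ⟨b, ih, (mem_nbhd hc).mpr h.symm⟩

lemma mem_ballFinset_of_dist (hc : Γ.Controlled Cc) {x y : V} {n : ℕ}
    (h : Γ.G.dist x y ≤ n) : y ∈ ballFinset hc x n := by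
  obtain ⟨p, hp⟩ := Γ.connected.exists_walk_length_eq_dist y x
  have hp' : p.length ≤ n := by rw [hp, SimpleGraph.dist_comm]; exact h
  exact ballFinset_mono hc x hp' (mem_ballFinset_of_walk hc x p)

lemma ballFinset_card (hc : Γ.Controlled Cc) (x : V) (n : ℕ) :
    (ballFinset hc x n).card ≤ (⌊Cc⌋₊ + 1) ^ n := by
  induction n with
  | zero => simp [ballFinset]
  | succ n ih =>
    unfold ballFinset
    calc ((ballFinset hc x n) ∪ (ballFinset hc x n).biUnion (fun z => nbhd hc z)).card
        ≤ (ballFinset hc x n).card + ((ballFinset hc x n).biUnion (fun z => nbhd hc z)).card :=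
          Finset.card_union_le _ _
    _ ≤ (ballFinset hc x n).card + ∑ z ∈ ballFinset hc x n, (nbhd hc z).card := by
          gcongr; exact Finset.card_biUnion_le
    _ ≤ (ballFinset hc x n).card + ∑ z ∈ ballFinset hc x n, ⌊Cc⌋₊ := by
          gcongr with z hz; exact nbhd_card hc z
    _ = (ballFinset hc x n).card * (1 + ⌊Cc⌋₊) := by
          rw [Finset.sum_const, smul_eq_mul]; ring
    _ ≤ (⌊Cc⌋₊ + 1) ^ n * (1 + ⌊Cc⌋₊) := by gcongr
    _ = (⌊Cc⌋₊ + 1) ^ (n + 1) := by ring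

lemma ball_subset_ballFinset (hc : Γ.Controlled Cc) (x : V) (r : ℝ) :
    Γ.ball x r ⊆ (ballFinset hc x ⌊r⌋₊ : Set V) := by
  intro y hy
  have : Γ.G.dist x y ≤ ⌊r⌋₊ := Nat.le_floor hy
  exact mem_ballFinset_of_dist hc this

lemma ball_finite (hc : Γ.Controlled Cc) (x : V) (r : ℝ) : (Γ.ball x r).Finite :=
  Set.Finite.subset (Finset.finite_toSet _) (ball_subset_ballFinset hc x r)

omit [DecidableEq V]

lemma self_mem_ball {x : V} {r : ℝ} (h : 0 ≤ r) : x ∈ Γ.ball x r := by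
  simp [ball, SimpleGraph.dist_self, h]

lemma ball_finite' (hc : Γ.Controlled Cc) (x : V) (r : ℝ) : (Γ.ball x r).Finite := by
  classical exact ball_finite hc x r

lemma vol_lower (hc : Γ.Controlled Cc) {x : V} {r : ℝ} (h0 : 0 ≤ r) :
    Γ.wV x ≤ Γ.vol x r := by
  rw [vol, setSum_eq_sum' (ball_finite' hc x r)]
  exact Finset.single_le_sum (fun y _ => le_of_lt (Γ.wV_pos y))
    ((ball_finite' hc x r).mem_toFinset.mpr (self_mem_ball h0))

lemma vol_pos (hc : Γ.Controlled Cc) {x : V} {r : ℝ} (h0 : 0 ≤ r) : 0 < Γ.vol x r :=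
  lt_of_lt_of_le (Γ.wV_pos x) (vol_lower hc h0)

lemma vol_upper (hc : Γ.Controlled Cc) (x : V) (r : ℝ) :
    Γ.vol x r ≤ ((⌊Cc⌋₊ + 1 : ℕ) : ℝ) ^ ⌊r⌋₊ * Cc ^ ⌊r⌋₊ * Γ.wV x := by
  classical
  rw [vol, setSum_eq_sum' (ball_finite' hc x r)]
  have hsub : (ball_finite' hc x r).toFinset ⊆ ballFinset hc x ⌊r⌋₊ := by
    intro y hy
    exact ball_subset_ballFinset hc x r ((ball_finite' hc x r).mem_toFinset.mp hy)
  calc ∑ y ∈ (ball_finite' hc x r).toFinset, Γ.wV y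
      ≤ ∑ y ∈ (ball_finite' hc x r).toFinset, Cc ^ ⌊r⌋₊ * Γ.wV x := by
        refine Finset.sum_le_sum ?_
        intro y hy
        have hy' : y ∈ Γ.ball x r := (ball_finite' hc x r).mem_toFinset.mp hy
        exact wV_le_of_dist hc (Nat.le_floor hy')
    _ = ((ball_finite' hc x r).toFinset.card : ℝ) * (Cc ^ ⌊r⌋₊ * Γ.wV x) := by
        rw [Finset.sum_const, nsmul_eq_mul]
    _ ≤ ((⌊Cc⌋₊ + 1 : ℕ) : ℝ) ^ ⌊r⌋₊ * (Cc ^ ⌊r⌋₊ * Γ.wV x) := by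
        have h1 : (ball_finite' hc x r).toFinset.card ≤ (⌊Cc⌋₊ + 1) ^ ⌊r⌋₊ :=
          le_trans (Finset.card_le_card hsub) (ballFinset_card hc x _)
        have h2 : (0:ℝ) ≤ Cc ^ ⌊r⌋₊ * Γ.wV x :=
          mul_nonneg (pow_nonneg (le_of_lt (lt_trans one_pos hc.1)) _) (le_of_lt (Γ.wV_pos x))
        refine mul_le_mul_of_nonneg_right ?_ h2
        exact_mod_cast Nat.cast_le.mpr h1
    _ = ((⌊Cc⌋₊ + 1 : ℕ) : ℝ) ^ ⌊r⌋₊ * Cc ^ ⌊r⌋₊ * Γ.wV x := by ring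

lemma avg_nonneg' {ε : ℝ} {f : V → ℝ} (hf : ∀ z, 0 ≤ f z) (x : V) : 0 ≤ Γ.avg ε f x := by
  refine div_nonneg (tsum_nonneg ?_) (tsum_nonneg ?_)
  · exact fun y => mul_nonneg (hf y) (le_of_lt (Γ.wV_pos y))
  · exact fun y => le_of_lt (Γ.wV_pos y)

lemma avg_ge (hc : Γ.Controlled Cc) {ε : ℝ} {f : V → ℝ} (hf : ∀ z, 0 ≤ f z)
    {x y : V} (hy : y ∈ Γ.ball x ε) :
    f y * Γ.wV y / Γ.vol x ε ≤ Γ.avg ε f x := by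
  have h0 : (0:ℝ) ≤ ε := le_trans (Nat.cast_nonneg _) hy
  have hvol : 0 < Γ.vol x ε := vol_pos hc h0
  rw [avg]
  gcongr
  rw [setSum_eq_sum' (ball_finite' hc x ε)]
  exact Finset.single_le_sum (fun z _ => mul_nonneg (hf z) (le_of_lt (Γ.wV_pos z)))
    ((ball_finite' hc x ε).mem_toFinset.mpr hy)

lemma exists_ne_zero_of_setSum_ne_zero (hc : Γ.Controlled Cc) {ε : ℝ} {f : V → ℝ} {x : V}
    (h : setSum (Γ.ball x ε) (fun y => f y * Γ.wV y) ≠ 0) :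
    ∃ y ∈ Γ.ball x ε, f y ≠ 0 := by
  by_contra hcon
  push_neg at hcon
  apply h
  rw [setSum_eq_sum' (ball_finite' hc x ε)]
  refine Finset.sum_eq_zero ?_
  intro y hy
  rw [hcon y ((ball_finite' hc x ε).mem_toFinset.mp hy), zero_mul]

end Helpers

end WeightedGraph

open WeightedGraph in
/-- **Claim (L² lower bound for the averaged pullback under a quasi-isometry).**
Let `Φ : Γ₁ → Γ₂` be a quasi-isometry between connected weighted graphs with controlled
and uniformly lazy weights.  Then there is a constant `C_B > 0` such that for every
`z ∈ Γ₂`, every `r ≥ 1`, and every non-negative `f : Γ₂ → ℝ` supported in `B₂(z,r)`: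
`‖f_ε ∘ Φ‖²_{L²(Γ₁)} ≥ C_B ‖f‖²_{L²(Γ₂)}`. -/
theorem l2_lower_bound_averaged_pullback {V₁ V₂ : Type*}
    (Γ₁ : WeightedGraph V₁) (Γ₂ : WeightedGraph V₂)
    (Cc₁ Ce₁ Cc₂ Ce₂ : ℝ)
    (h₁c : Γ₁.Controlled Cc₁) (h₁e : Γ₁.UniformlyLazy Ce₁)
    (h₂c : Γ₂.Controlled Cc₂) (h₂e : Γ₂.UniformlyLazy Ce₂)
    (Φ : V₁ → V₂) (ε a b Cq : ℝ) (hΦ : IsQI Γ₁ Γ₂ Φ ε a b Cq) :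
    ∃ CB : ℝ, 0 < CB ∧
      ∀ z : V₂, ∀ r : ℝ, 1 ≤ r → ∀ f : V₂ → ℝ, (∀ x, 0 ≤ f x) →
        (∀ x : V₂, f x ≠ 0 → x ∈ Γ₂.ball z r) →
        CB * Γ₂.sqnorm f ≤ Γ₁.sqnorm (fun x => Γ₂.avg ε f (Φ x)) := by
  classical
  have hCc2 : (0:ℝ) < Cc₂ := lt_trans one_pos h₂c.1
  have hε0 : (0:ℝ) ≤ ε := le_of_lt hΦ.eps_pos
  set m : ℕ := ⌊ε⌋₊ with hm
  set N : ℕ := (⌊Cc₂⌋₊ + 1) ^ m with hN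
  have hNpos : (0:ℝ) < (N:ℝ) := by positivity
  set K : ℝ := (N:ℝ) * Cc₂ ^ m with hK
  have hKpos : 0 < K := by positivity
  set C₀ : ℝ := Cq * K ^ 2 * Cc₂ ^ m with hC0
  have hC0pos : 0 < C₀ := by
    have := hΦ.Cq_pos
    positivity
  refine ⟨(C₀ * (N:ℝ))⁻¹, by positivity, ?_⟩
  intro z r hr f hf hsupp
  choose α hα using hΦ.dense
  set g : V₁ → ℝ := fun β => (Γ₂.avg ε f (Φ β)) ^ 2 * Γ₁.wV β with hg
  have hgnn : ∀ β, 0 ≤ g β := fun β => mul_nonneg (sq_nonneg _) (le_of_lt (Γ₁.wV_pos β))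
  -- pointwise estimate
  have est : ∀ x : V₂, f x ^ 2 * Γ₂.wV x ≤ C₀ * g (α x) := by
    intro x
    set y := Φ (α x) with hy
    have hd : (Γ₂.G.dist y x : ℝ) ≤ ε := hα x
    have hball : x ∈ Γ₂.ball y ε := hd
    have hvpos : 0 < Γ₂.vol y ε := vol_pos h₂c hε0
    have hvle : Γ₂.vol y ε ≤ K * Γ₂.wV y := by
      refine le_trans (vol_upper h₂c y ε) ?_
      have : ((⌊Cc₂⌋₊ + 1 : ℕ) : ℝ) ^ m = (N:ℝ) := by
        rw [hN]; push_cast; ring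
      rw [← hm, this, hK]
    have havg : f x * Γ₂.wV x / Γ₂.vol y ε ≤ Γ₂.avg ε f y := avg_ge h₂c hf hball
    have hwyx : Γ₂.wV y ≤ Cc₂ ^ m * Γ₂.wV x := by
      refine wV_le_of_dist h₂c (n := m) ?_
      rw [SimpleGraph.dist_comm]
      exact Nat.le_floor hd
    have hwp : Γ₂.wV y / Cq ≤ Γ₁.wV (α x) := by
      have h1 := hΦ.weight_upper (α x)
      rw [div_le_iff₀ hΦ.Cq_pos, hy]
      nlinarith [hΦ.Cq_pos]
    have hA0 : 0 ≤ Γ₂.avg ε f y := avg_nonneg' hf y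
    have hu : 0 < Γ₂.wV y := Γ₂.wV_pos y
    have hw : 0 < Γ₂.wV x := Γ₂.wV_pos x
    have hF : 0 ≤ f x := hf x
    have ht : f x * Γ₂.wV x / (K * Γ₂.wV y) ≤ Γ₂.avg ε f y := by
      refine le_trans ?_ havg
      gcongr
    have ht0 : 0 ≤ f x * Γ₂.wV x / (K * Γ₂.wV y) := by positivity
    have h2 : (f x * Γ₂.wV x / (K * Γ₂.wV y)) ^ 2 * (Γ₂.wV y / Cq) ≤
        (Γ₂.avg ε f y) ^ 2 * Γ₁.wV (α x) := by
      have hCq := hΦ.Cq_pos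
      refine mul_le_mul (pow_le_pow_left₀ ht0 ht 2) hwp (by positivity) (by positivity)
    have h3 : f x ^ 2 * Γ₂.wV x ≤ C₀ * ((f x * Γ₂.wV x / (K * Γ₂.wV y)) ^ 2 * (Γ₂.wV y / Cq)) := by
      have hCq := hΦ.Cq_pos
      have key : C₀ * ((f x * Γ₂.wV x / (K * Γ₂.wV y)) ^ 2 * (Γ₂.wV y / Cq)) =
          Cc₂ ^ m * ((f x * Γ₂.wV x) ^ 2 / Γ₂.wV y) := by
        rw [hC0]
        field_simp
      rw [key, ← mul_div_assoc, le_div_iff₀ hu]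
      nlinarith [mul_le_mul_of_nonneg_left hwyx (mul_nonneg (sq_nonneg (f x)) (le_of_lt hw))]
    calc f x ^ 2 * Γ₂.wV x
        ≤ C₀ * ((f x * Γ₂.wV x / (K * Γ₂.wV y)) ^ 2 * (Γ₂.wV y / Cq)) := h3
      _ ≤ C₀ * ((Γ₂.avg ε f y) ^ 2 * Γ₁.wV (α x)) :=
          mul_le_mul_of_nonneg_left h2 (le_of_lt hC0pos)
      _ = C₀ * g (α x) := by rw [hg]
  -- support of g
  set β₀ := α z with hβ₀
  set M : ℕ := ⌊a * (r + 2 * ε + b)⌋₊ with hM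
  have hgsupp : ∀ β : V₁, β ∉ ballFinset h₁c β₀ M → g β = 0 := by
    intro β hβ
    by_contra hgne
    have havgne : Γ₂.avg ε f (Φ β) ≠ 0 := by
      intro h
      apply hgne
      rw [hg]
      simp [h]
    have hnum : setSum (Γ₂.ball (Φ β) ε) (fun y => f y * Γ₂.wV y) ≠ 0 := by
      intro h
      exact havgne (by rw [avg, h, zero_div])
    obtain ⟨x, hxball, hxne⟩ := exists_ne_zero_of_setSum_ne_zero h₂c hnum
    have hxz : (Γ₂.G.dist z x : ℝ) ≤ r := hsupp x hxne
    have hxd : (Γ₂.G.dist (Φ β) x : ℝ) ≤ ε := hxball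
    have t1 : Γ₂.G.dist (Φ β) z ≤ Γ₂.G.dist (Φ β) x + Γ₂.G.dist x z :=
      Γ₂.connected.dist_triangle
    have t2 : Γ₂.G.dist (Φ β) (Φ β₀) ≤ Γ₂.G.dist (Φ β) z + Γ₂.G.dist z (Φ β₀) :=
      Γ₂.connected.dist_triangle
    have hc1 : Γ₂.G.dist x z = Γ₂.G.dist z x := SimpleGraph.dist_comm
    have hc2 : Γ₂.G.dist z (Φ β₀) = Γ₂.G.dist (Φ β₀) z := SimpleGraph.dist_comm
    have hd0 : (Γ₂.G.dist (Φ β₀) z : ℝ) ≤ ε := hα z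
    have hd2 : (Γ₂.G.dist (Φ β) (Φ β₀) : ℝ) ≤ r + 2 * ε := by
      have t1' : (Γ₂.G.dist (Φ β) z : ℝ) ≤ (Γ₂.G.dist (Φ β) x : ℝ) + (Γ₂.G.dist x z : ℝ) := by
        exact_mod_cast t1
      have t2' : (Γ₂.G.dist (Φ β) (Φ β₀) : ℝ) ≤ (Γ₂.G.dist (Φ β) z : ℝ) + (Γ₂.G.dist z (Φ β₀) : ℝ) := by
        exact_mod_cast t2
      rw [hc1] at t1'
      rw [hc2] at t2'
      linarith
    have hlow := hΦ.dist_lower β β₀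
    have hd1 : (Γ₁.G.dist β β₀ : ℝ) ≤ a * (r + 2 * ε + b) := by
      have ha := hΦ.a_pos
      have h5 : a⁻¹ * (Γ₁.G.dist β β₀ : ℝ) ≤ r + 2 * ε + b := by linarith
      calc (Γ₁.G.dist β β₀ : ℝ) = a * (a⁻¹ * (Γ₁.G.dist β β₀ : ℝ)) := by
            field_simp
        _ ≤ a * (r + 2 * ε + b) := mul_le_mul_of_nonneg_left h5 (le_of_lt ha)
    have hd1' : Γ₁.G.dist β₀ β ≤ M := by
      rw [SimpleGraph.dist_comm]
      exact Nat.le_floor hd1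
    exact hβ (mem_ballFinset_of_dist h₁c hd1')
  have hgsum : Summable g := summable_of_ne_finset_zero hgsupp
  -- collect
  have hs1 : Γ₁.sqnorm (fun x => Γ₂.avg ε f (Φ x)) = ∑' β, g β := rfl
  have hBfin := ball_finite' h₂c z r
  have hB : Γ₂.sqnorm f = ∑ x ∈ hBfin.toFinset, f x ^ 2 * Γ₂.wV x := by
    refine tsum_eq_sum ?_
    intro x hx
    have hfx : f x = 0 := by
      by_contra h
      exact hx (hBfin.mem_toFinset.mpr (hsupp x h))
    rw [hfx]
    ring
  set B := hBfin.toFinset with hBdef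
  set T := B.image α with hT
  have step1 : ∑ x ∈ B, f x ^ 2 * Γ₂.wV x ≤ ∑ x ∈ B, C₀ * g (α x) :=
    Finset.sum_le_sum (fun x _ => est x)
  have step3 : ∑ x ∈ B, g (α x) ≤ (N:ℝ) * ∑ β ∈ T, g β := by
    rw [← Finset.sum_fiberwise_of_maps_to (fun x hx => Finset.mem_image_of_mem α hx)
      (fun x => g (α x)), Finset.mul_sum]
    refine Finset.sum_le_sum ?_
    intro β hβ
    have hcongr : ∀ x ∈ B.filter (fun x => α x = β), g (α x) = g β := fun x hx => by
      rw [(Finset.mem_filter.mp hx).2]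
    rw [Finset.sum_congr rfl hcongr, Finset.sum_const, nsmul_eq_mul]
    have hcard : (B.filter (fun x => α x = β)).card ≤ N := by
      refine le_trans (Finset.card_le_card ?_) (ballFinset_card h₂c (Φ β) m)
      intro x hx
      obtain ⟨hxB, hxα⟩ := Finset.mem_filter.mp hx
      have hdx : (Γ₂.G.dist (Φ β) x : ℝ) ≤ ε := by rw [← hxα]; exact hα x
      exact mem_ballFinset_of_dist h₂c (Nat.le_floor hdx)
    exact mul_le_mul_of_nonneg_right (by exact_mod_cast hcard) (hgnn β)
  have step4 : ∑ β ∈ T, g β ≤ ∑' β, g β :=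
    Summable.sum_le_tsum T (fun β _ => hgnn β) hgsum
  have hmain : Γ₂.sqnorm f ≤ C₀ * (N:ℝ) * Γ₁.sqnorm (fun x => Γ₂.avg ε f (Φ x)) := by
    rw [hB, hs1]
    calc ∑ x ∈ B, f x ^ 2 * Γ₂.wV x
        ≤ ∑ x ∈ B, C₀ * g (α x) := step1
      _ = C₀ * ∑ x ∈ B, g (α x) := by rw [Finset.mul_sum]
      _ ≤ C₀ * ((N:ℝ) * ∑ β ∈ T, g β) := mul_le_mul_of_nonneg_left step3 (le_of_lt hC0pos)
      _ ≤ C₀ * ((N:ℝ) * ∑' β, g β) := by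
          refine mul_le_mul_of_nonneg_left ?_ (le_of_lt hC0pos)
          exact mul_le_mul_of_nonneg_left step4 (le_of_lt hNpos)
      _ = C₀ * (N:ℝ) * ∑' β, g β := by ring
  rw [inv_mul_le_iff₀ (by positivity)]
  exact hmain
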